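/- arXiv:2605.15493 — 6 statements merged into one kernel-verified Lean document; each statement's English description precedes it below -/
import Mathlib

section
/- For every integer n ≥ 1 and all elements a_1, ..., a_{2n+1}, b_1, b_2 of S_{(4,124)}, if U = a_1a_2 + a_2a_3 + ... + a_{2n}a_{2n+1} + a_{2n+1}a_1 + b_1b_2 + b_2b_1 + b_1, then b_2 + U = U (i.e., S_{(4,124)} satisfies the inequality q^(n) ≼ u^(n) for every n ≥ 1). -/
/-- The four-element ai-semiring `S_{(4,124)}`; `e1, e2, e3, e4` stand for `1, 2, 3, 4`. -/
inductive S124 : Type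
  | e1 | e2 | e3 | e4
  deriving DecidableEq

open S124

/-- Addition of `S_{(4,124)}`. -/
def S124.add : S124 → S124 → S124
  | e1, _ => e1
  | _, e1 => e1
  | e2, e2 => e2
  | e2, e3 => e2
  | e3, e2 => e2
  | e2, e4 => e1
  | e4, e2 => e1
  | e3, e3 => e3
  | e3, e4 => e1
  | e4, e3 => e1
  | e4, e4 => e4

/-- Multiplication of `S_{(4,124)}`. -/
def S124.mul : S124 → S124 → S124
  | e1, _ => e1
  | _, e1 => e1
  | e2, e2 => e1
  | e2, e3 => e2
  | e3, e2 => e2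
  | e2, e4 => e1
  | e4, e2 => e1
  | e3, e3 => e3
  | e3, e4 => e4
  | e4, e3 => e4
  | e4, e4 => e2

instance : Add S124 := ⟨S124.add⟩
instance : Mul S124 := ⟨S124.mul⟩

instance : Fintype S124 :=
  ⟨{e1, e2, e3, e4}, by intro x; cases x <;> simp⟩

lemma S124.add_assoc' : ∀ x y z : S124, x + (y + z) = (x + y) + z := by decide

lemma S124.add_eq_e4 : ∀ x y : S124, x + y = e4 → x = e4 ∧ y = e4 := by decide

lemma S124.mul_uniq : ∀ x y z : S124, x * y = e4 → x * z = e4 → y = z := by decide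

lemma S124.mul_comm4 : ∀ x y : S124, x * y = e4 → y * x = e4 := by decide

lemma S124.sq_ne_e4 : ∀ x : S124, x * x ≠ e4 := by decide

lemma S124.key : ∀ b1 b2 x : S124, x ≠ e4 →
    b2 + (x + (b1 * b2 + (b2 * b1 + b1))) = x + (b1 * b2 + (b2 * b1 + b1)) := by decide

/-- Pull a summand out of the base of the fold. -/
lemma fold_add (g : ℕ → S124) (l : List ℕ) (z t : S124) :
    l.foldr (fun i acc => g i + acc) (z + t) =
      l.foldr (fun i acc => g i + acc) z + t := by
  induction l with
  | nil => rfl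
  | cons x xs ih => simp [List.foldr, ih, S124.add_assoc']

/-- If a fold of sums equals `e4`, every summand is `e4`. -/
lemma fold_e4 (g : ℕ → S124) (l : List ℕ) (z : S124)
    (h : l.foldr (fun i acc => g i + acc) z = e4) :
    z = e4 ∧ ∀ i ∈ l, g i = e4 := by
  induction l with
  | nil => exact ⟨h, by simp⟩
  | cons x xs ih =>
    simp only [List.foldr] at h
    obtain ⟨h1, h2⟩ := S124.add_eq_e4 _ _ h
    obtain ⟨hz, hall⟩ := ih h2
    refine ⟨hz, ?_⟩
    intro i hi
    rcases List.mem_cons.mp hi with hi | hi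
    · exact hi ▸ h1
    · exact hall i hi

/-- Alternation forced by an all-`e4` path. -/
lemma alt (a : ℕ → S124) (n : ℕ) (h : ∀ i < 2 * n, a (i + 1) * a (i + 2) = e4) :
    ∀ i ≤ 2 * n, a (i + 1) = if i % 2 = 0 then a 1 else a 2 := by
  intro i
  induction i with
  | zero => simp
  | succ k ih =>
    intro hk
    have e := ih (by omega)
    have hkk := h k (by omega)
    have h0 := h 0 (by omega)
    simp only [Nat.zero_add] at h0
    rcases Nat.mod_two_eq_zero_or_one k with hm | hm
    · rw [hm] at e; simp at e
      rw [e] at hkk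
      have he : a (k + 2) = a 2 := (S124.mul_uniq _ _ _ h0 hkk).symm
      simp [show (k + 1) % 2 = 1 by omega, he]
    · rw [hm] at e; simp at e
      rw [e] at hkk
      have he : a (k + 2) = a 1 := (S124.mul_uniq _ _ _ (S124.mul_comm4 _ _ h0) hkk).symm
      simp [show (k + 1) % 2 = 0 by omega, he]

/-- For every `n ≥ 1` and all `a₁, …, a_{2n+1}, b₁, b₂` in `S_{(4,124)}`,
with `U = a₁a₂ + a₂a₃ + ⋯ + a_{2n}a_{2n+1} + a_{2n+1}a₁ + b₁b₂ + b₂b₁ + b₁`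
we have `b₂ + U = U`, i.e. `S_{(4,124)}` satisfies `q⁽ⁿ⁾ ≼ u⁽ⁿ⁾` for every `n ≥ 1`. -/
theorem S124_satisfies_qn_le_un (n : ℕ) (hn : 1 ≤ n) (a b : ℕ → S124)
    (U : S124)
    (hU : U = (List.range (2 * n)).foldr (fun i acc => a (i + 1) * a (i + 2) + acc)
      (a (2 * n + 1) * a 1 + (b 1 * b 2 + (b 2 * b 1 + b 1)))) :
    b 2 + U = U := by
  set X := (List.range (2 * n)).foldr (fun i acc => a (i + 1) * a (i + 2) + acc)
      (a (2 * n + 1) * a 1) with hX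
  have hU' : U = X + (b 1 * b 2 + (b 2 * b 1 + b 1)) := by
    rw [hU, hX, fold_add]
  have hXne : X ≠ e4 := by
    intro hx
    obtain ⟨hz, hall⟩ := fold_e4 _ _ _ (hX ▸ hx)
    have hcyc : ∀ i < 2 * n, a (i + 1) * a (i + 2) = e4 := by
      intro i hi; exact hall i (List.mem_range.mpr hi)
    have halt := alt a n hcyc (2 * n) le_rfl
    simp [Nat.mul_mod_right] at halt
    rw [halt] at hz
    exact S124.sq_ne_e4 _ hz
  rw [hU']
  exact S124.key _ _ _ hXne
end

section
/- For every integer n ≥ 1 and all elements a_1, ..., a_{2n+1}, b_1, b_2 of S_2, if U = a_1a_2 + a_2a_3 + ... + a_{2n}a_{2n+1} + a_{2n+1}a_1 + b_1b_2 + b_2b_1 + b_1, then b_2 + U = U (i.e., S_2 satisfies the inequality q^(n) ≼ u^(n) for every n ≥ 1). -/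
/-- The three-element ai-semiring `S₂`; `e1, e2, e3` stand for `1, 2, 3`. -/
inductive S2T : Type
  | e1 | e2 | e3
  deriving DecidableEq

open S2T

/-- Addition of `S₂`. -/
def S2T.add : S2T → S2T → S2T
  | e1, _ => e1
  | _, e1 => e1
  | e2, e2 => e2
  | e2, e3 => e1
  | e3, e2 => e1
  | e3, e3 => e3

/-- Multiplication of `S₂`. -/
def S2T.mul : S2T → S2T → S2T
  | e3, e3 => e2
  | _, _ => e1

instance : Add S2T := ⟨S2T.add⟩
instance : Mul S2T := ⟨S2T.mul⟩

/-- For every `n ≥ 1` and all `a₁, …, a_{2n+1}, b₁, b₂` in `S₂`,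
with `U = a₁a₂ + a₂a₃ + ⋯ + a_{2n}a_{2n+1} + a_{2n+1}a₁ + b₁b₂ + b₂b₁ + b₁`
we have `b₂ + U = U`, i.e. `S₂` satisfies `q⁽ⁿ⁾ ≼ u⁽ⁿ⁾` for every `n ≥ 1`. -/
theorem S2_satisfies_qn_le_un (n : ℕ) (hn : 1 ≤ n) (a b : ℕ → S2T)
    (U : S2T)
    (hU : U = (List.range (2 * n)).foldr (fun i acc => a (i + 1) * a (i + 2) + acc)
      (a (2 * n + 1) * a 1 + (b 1 * b 2 + (b 2 * b 1 + b 1)))) :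
    b 2 + U = U := by
  have h1 : ∀ x : S2T, x + e1 = e1 := by intro x; cases x <;> rfl
  have hT : ∀ x y : S2T, x * y + (y * x + x) = e1 := by intro x y; cases x <;> cases y <;> rfl
  have hbase : a (2 * n + 1) * a 1 + (b 1 * b 2 + (b 2 * b 1 + b 1)) = e1 := by
    rw [hT]; exact h1 _
  have hfold : ∀ l : List ℕ,
      l.foldr (fun i acc => a (i + 1) * a (i + 2) + acc) e1 = e1 := by
    intro l; induction l with
    | nil => rfl
    | cons x xs ih => simp [List.foldr, ih, h1]
  rw [hU, hbase, hfold]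
  exact h1 _
end

section
/- For every integer n ≥ 1 and all elements a_1, ..., a_{2n+1}, b_1, b_2 of S_7, if U = a_1a_2 + a_2a_3 + ... + a_{2n}a_{2n+1} + a_{2n+1}a_1 + b_1b_2 + b_2b_1 + b_1, then b_2 + U = U (i.e., S_7 satisfies the inequality q^(n) ≼ u^(n) for every n ≥ 1). -/
/-- The three-element ai-semiring `S₇`; `z, a, o` stand for `0, a, 1`. -/
inductive S7T : Type
  | z | a | o
  deriving DecidableEq

open S7T

/-- Addition of `S₇`. -/
def S7T.add : S7T → S7T → S7T
  | z, _ => z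
  | _, z => z
  | a, a => a
  | a, o => z
  | o, a => z
  | o, o => o

/-- Multiplication of `S₇`. -/
def S7T.mul : S7T → S7T → S7T
  | z, _ => z
  | _, z => z
  | a, a => z
  | a, o => a
  | o, a => a
  | o, o => o

instance : Add S7T := ⟨S7T.add⟩
instance : Mul S7T := ⟨S7T.mul⟩

instance : Fintype S7T :=
  ⟨{S7T.z, S7T.a, S7T.o}, by intro x; cases x <;> simp⟩

lemma S7_add_eq_a : ∀ x y : S7T, x + y = S7T.a → x = S7T.a ∧ y = S7T.a := by decide

lemma S7_add_eq_o : ∀ x y : S7T, x + y = S7T.o → y = S7T.o := by decide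

lemma S7_add_z : ∀ x : S7T, x + S7T.z = S7T.z := by decide

lemma S7_mul_step : ∀ x y w : S7T, x * y = S7T.a → y * w = S7T.a → w = x := by decide

lemma S7_sq_ne_a : ∀ x : S7T, x * x ≠ S7T.a := by decide

lemma S7_foldr_eq_a (f : ℕ → S7T) (l : List ℕ) (acc : S7T)
    (h : l.foldr (fun i acc => f i + acc) acc = S7T.a) :
    (∀ i ∈ l, f i = S7T.a) ∧ acc = S7T.a := by
  induction l with
  | nil => exact ⟨by simp, h⟩
  | cons x xs ih =>
    simp only [List.foldr_cons] at h
    obtain ⟨h1, h2⟩ := S7_add_eq_a _ _ h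
    obtain ⟨h3, h4⟩ := ih h2
    refine ⟨fun i hi => ?_, h4⟩
    rcases List.mem_cons.1 hi with rfl | hi
    · exact h1
    · exact h3 i hi

lemma S7_foldr_eq_o (f : ℕ → S7T) (l : List ℕ) (acc : S7T)
    (h : l.foldr (fun i acc => f i + acc) acc = S7T.o) : acc = S7T.o := by
  induction l with
  | nil => exact h
  | cons x xs ih =>
    simp only [List.foldr_cons] at h
    exact ih (S7_add_eq_o _ _ h)

/-- An odd cycle cannot have all consecutive products equal to `a`. -/
lemma S7_parity (n : ℕ) (a : ℕ → S7T)
    (hprod : ∀ i < 2 * n, a (i + 1) * a (i + 2) = S7T.a)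
    (hlast : a (2 * n + 1) * a 1 = S7T.a) : False := by
  have key : ∀ k, 2 * k ≤ 2 * n → a (2 * k + 1) = a 1 := by
    intro k
    induction k with
    | zero => intro _; rfl
    | succ k ih =>
      intro hk
      have e1 : a (2 * k + 1) * a (2 * k + 2) = S7T.a := hprod (2 * k) (by omega)
      have e2 : a (2 * k + 2) * a (2 * k + 3) = S7T.a := by
        have := hprod (2 * k + 1) (by omega)
        rw [show 2 * k + 1 + 1 = 2 * k + 2 from by omega,
          show 2 * k + 1 + 2 = 2 * k + 3 from by omega] at this
        exact this
      have hstep : a (2 * k + 3) = a (2 * k + 1) := S7_mul_step _ _ _ e1 e2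
      rw [show 2 * (k + 1) + 1 = 2 * k + 3 from by omega, hstep]
      exact ih (by omega)
  rw [key n le_rfl] at hlast
  exact S7_sq_ne_a (a 1) hlast

/-- For every `n ≥ 1` and all `a₁, …, a_{2n+1}, b₁, b₂` in `S₇`,
with `U = a₁a₂ + a₂a₃ + ⋯ + a_{2n}a_{2n+1} + a_{2n+1}a₁ + b₁b₂ + b₂b₁ + b₁`
we have `b₂ + U = U`, i.e. `S₇` satisfies `q⁽ⁿ⁾ ≼ u⁽ⁿ⁾` for every `n ≥ 1`. -/
theorem S7_satisfies_qn_le_un (n : ℕ) (hn : 1 ≤ n) (a b : ℕ → S7T)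
    (U : S7T)
    (hU : U = (List.range (2 * n)).foldr (fun i acc => a (i + 1) * a (i + 2) + acc)
      (a (2 * n + 1) * a 1 + (b 1 * b 2 + (b 2 * b 1 + b 1)))) :
    b 2 + U = U := by
  have hUa : U ≠ S7T.a := by
    intro h
    rw [h] at hU
    obtain ⟨h1, h2⟩ := S7_foldr_eq_a _ _ _ hU.symm
    obtain ⟨hlast, _⟩ := S7_add_eq_a _ _ h2
    exact S7_parity n a (fun i hi => h1 i (List.mem_range.2 hi)) hlast
  have hUo : U = S7T.o → b 2 = S7T.o := by
    intro h
    rw [h] at hU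
    have hacc := S7_foldr_eq_o _ _ _ hU.symm
    have htail : b 1 * b 2 + (b 2 * b 1 + b 1) = S7T.o := S7_add_eq_o _ _ hacc
    revert htail
    have : ∀ x y : S7T, x * y + (y * x + x) = S7T.o → y = S7T.o := by decide
    exact this (b 1) (b 2)
  cases hv : U with
  | z => exact S7_add_z _
  | a => exact absurd hv hUa
  | o => rw [hUo hv]; rfl
end

section
/- For every integer n ≥ 1 and all elements a_1, ..., a_{2n+1}, b_1, b_2 of S_53, if U = a_1a_2 + a_2a_3 + ... + a_{2n}a_{2n+1} + a_{2n+1}a_1 + b_1b_2 + b_2b_1 + b_1, then b_2 + U = U (i.e., S_53 satisfies the inequality q^(n) ≼ u^(n) for every n ≥ 1). -/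
/-- The three-element ai-semiring `S₅₃`; `e1, e2, e3` stand for `1, 2, 3`. -/
inductive S53T : Type
  | e1 | e2 | e3
  deriving DecidableEq

open S53T

/-- Addition of `S₅₃`. -/
def S53T.add : S53T → S53T → S53T
  | e3, _ => e3
  | _, e3 => e3
  | e1, _ => e1
  | _, e1 => e1
  | e2, e2 => e2

/-- Multiplication of `S₅₃`. -/
def S53T.mul : S53T → S53T → S53T
  | e3, _ => e3
  | _, e3 => e3
  | e1, e1 => e3
  | e1, e2 => e1
  | e2, e1 => e1
  | e2, e2 => e2

instance : Add S53T := ⟨S53T.add⟩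
instance : Mul S53T := ⟨S53T.mul⟩


instance : Fintype S53T := ⟨{e1, e2, e3}, by intro x; cases x <;> decide⟩

lemma S53T.key : ∀ (c t x : S53T), c + x = x → c + (t + x) = t + x := by decide

lemma S53T.fold (a : ℕ → S53T) (c : S53T) :
    ∀ (l : List ℕ) (x : S53T), c + x = x →
      c + l.foldr (fun i acc => a (i + 1) * a (i + 2) + acc) x
        = l.foldr (fun i acc => a (i + 1) * a (i + 2) + acc) x := by
  intro l
  induction l with
  | nil => intro x h; exact h
  | cons i l ih => intro x h; exact S53T.key _ _ _ (ih x h)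

/-- For every `n ≥ 1` and all `a₁, …, a_{2n+1}, b₁, b₂` in `S₅₃`,
with `U = a₁a₂ + a₂a₃ + ⋯ + a_{2n}a_{2n+1} + a_{2n+1}a₁ + b₁b₂ + b₂b₁ + b₁`
we have `b₂ + U = U`, i.e. `S₅₃` satisfies `q⁽ⁿ⁾ ≼ u⁽ⁿ⁾` for every `n ≥ 1`. -/
theorem S53_satisfies_qn_le_un (n : ℕ) (hn : 1 ≤ n) (a b : ℕ → S53T)
    (U : S53T)
    (hU : U = (List.range (2 * n)).foldr (fun i acc => a (i + 1) * a (i + 2) + acc)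
      (a (2 * n + 1) * a 1 + (b 1 * b 2 + (b 2 * b 1 + b 1)))) :
    b 2 + U = U := by
  subst hU
  have base : ∀ u v : S53T, v + (u * v + (v * u + u)) = u * v + (v * u + u) := by decide
  exact S53T.fold a (b 2) _ _ (S53T.key _ _ _ (base (b 1) (b 2)))
end

section
/- The map f from S_{(4,124)} to S_7 defined by f(1) = f(2) = 0, f(3) = 1, f(4) = a is a surjective map preserving addition and multiplication (f(x+y) = f(x)+f(y) and f(x·y) = f(x)·f(y) for all x, y), and f(x) = f(y) holds exactly when x = y or {x,y} = {1,2}; hence S_7 is isomorphic to the quotient of S_{(4,124)} by the congruence whose unique nontrivial class is {1,2}. -/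
open S124

open S7T

/-- The map `f : S_{(4,124)} → S₇` with `f(1) = f(2) = 0`, `f(3) = 1`,
`f(4) = a` is surjective, preserves addition and multiplication, and identifies exactly
the elements `1` and `2`; hence `S₇` is isomorphic to the quotient of `S_{(4,124)}` by the
congruence whose unique nontrivial class is `{1, 2}`. -/
theorem S7_is_quotient_of_S124 (f : S124 → S7T)
    (hf1 : f S124.e1 = S7T.z) (hf2 : f S124.e2 = S7T.z)
    (hf3 : f S124.e3 = S7T.o) (hf4 : f S124.e4 = S7T.a) :
    Function.Surjective f ∧
    (∀ x y : S124, f (x + y) = f x + f y) ∧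
    (∀ x y : S124, f (x * y) = f x * f y) ∧
    (∀ x y : S124, f x = f y ↔
      (x = y ∨ (x = S124.e1 ∧ y = S124.e2) ∨ (x = S124.e2 ∧ y = S124.e1))) := by
  refine ⟨?_, ?_, ?_, ?_⟩
  · intro s; cases s
    · exact ⟨S124.e1, hf1⟩
    · exact ⟨S124.e4, hf4⟩
    · exact ⟨S124.e3, hf3⟩
  · intro x y; cases x <;> cases y <;> simp_all [HAdd.hAdd, Add.add, S124.add, S7T.add]
  · intro x y; cases x <;> cases y <;> simp_all [HMul.hMul, Mul.mul, S124.mul, S7T.mul]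
  · intro x y; cases x <;> cases y <;> simp_all
end

section
/- For every integer n ≥ 1, the term u^(n) = x_1x_2 + x_2x_3 + ... + x_{2n}x_{2n+1} + x_{2n+1}x_1 + y_1y_2 + y_2y_1 + y_1 (over the 2n+3 distinct variables x_1, ..., x_{2n+1}, y_1, y_2) satisfies δ(u^(n)) = ∅; that is, there is no subset Z of the variables of u^(n) such that every summand of u^(n) contains exactly one variable from Z, occurring exactly once in that summand. -/
/-- `δ(u)`: the set of subsets `Z` of `c(u)` such that for every word `w` of `u`,
`Z ∩ c(w)` is a singleton `{x}` and `x` occurs exactly once in `w`.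
(Words are lists of variables, indexed by `ℕ`; a term is the list of its words.) -/
def delta (u : List (List ℕ)) : Set (Set ℕ) :=
  {Z | Z ⊆ {x | ∃ w ∈ u, x ∈ w} ∧
    ∀ w ∈ u, ∃ x ∈ Z, x ∈ w ∧ (∀ y ∈ Z, y ∈ w → y = x) ∧ w.count x = 1}

/-- The term `u⁽ⁿ⁾ = x₁x₂ + x₂x₃ + ⋯ + x_{2n}x_{2n+1} + x_{2n+1}x₁ + y₁y₂ + y₂y₁ + y₁`,
where the variables `x₁, …, x_{2n+1}` are the naturals `1, …, 2n+1` and `y₁, y₂` are the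
naturals `2n+2, 2n+3` (so that all `2n+3` variables are distinct). -/
def uTerm (n : ℕ) : List (List ℕ) :=
  ((List.range (2 * n)).map fun i => [i + 1, i + 2]) ++
    [[2 * n + 1, 1], [2 * n + 2, 2 * n + 3], [2 * n + 3, 2 * n + 2], [2 * n + 2]]

/-- For every `n ≥ 1`, `δ(u⁽ⁿ⁾) = ∅`: there is no set `Z` of variables
of `u⁽ⁿ⁾` such that each summand of `u⁽ⁿ⁾` contains exactly one variable from `Z`,
occurring exactly once in that summand. -/
theorem delta_uTerm_empty (n : ℕ) (hn : 1 ≤ n) : delta (uTerm n) = ∅ := by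
  ext Z
  simp only [Set.mem_empty_iff_false, iff_false]
  rintro ⟨-, h⟩
  have edge : ∀ i, i < 2*n → ¬((i+1 ∈ Z) ↔ (i+2 ∈ Z)) := by
    intro i hi
    have hw : [i+1, i+2] ∈ uTerm n := by
      unfold uTerm
      apply List.mem_append_left
      simp only [List.mem_map, List.mem_range]
      exact ⟨i, hi, rfl⟩
    obtain ⟨x, hxZ, hxw, huniq, -⟩ := h _ hw
    simp only [List.mem_cons, List.not_mem_nil, or_false] at hxw
    intro hiff
    rcases hxw with rfl | rfl
    · have h2 : i+2 ∈ Z := hiff.mp hxZ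
      have := huniq _ h2 (by simp)
      omega
    · have h1 : i+1 ∈ Z := hiff.mpr hxZ
      have := huniq _ h1 (by simp)
      omega
  have last : ¬((2*n+1 ∈ Z) ↔ (1 ∈ Z)) := by
    have hw : [2*n+1, 1] ∈ uTerm n := by
      unfold uTerm
      apply List.mem_append_right
      simp
    obtain ⟨x, hxZ, hxw, huniq, -⟩ := h _ hw
    simp only [List.mem_cons, List.not_mem_nil, or_false] at hxw
    intro hiff
    rcases hxw with rfl | rfl
    · have h2 : (1:ℕ) ∈ Z := hiff.mp hxZ
      have := huniq _ h2 (by simp)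
      omega
    · have h1 : 2*n+1 ∈ Z := hiff.mpr hxZ
      have := huniq _ h1 (by simp)
      omega
  have key : ∀ j, j ≤ n → ((2*j+1 ∈ Z) ↔ (1 ∈ Z)) := by
    intro j hj
    induction j with
    | zero => simp
    | succ k ih =>
      have h1 := edge (2*k) (by omega)
      have h2 := edge (2*k+1) (by omega)
      have h3 := ih (by omega)
      have e1 : 2*k+1+1 = 2*k+2 := by ring
      have e2 : 2*k+1+2 = 2*(k+1)+1 := by ring
      rw [e1, e2] at h2
      have e0 : 2*k+0+1 = 2*k+1 := by ring
      tauto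
  exact last (key n le_rfl)
end
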